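/- Let V be the vertex set of a median graph, and fix x₀, x ∈ V and an integer n ≥ 1 with d_nor(x₀,x) ≥ n; let v, H_n and F_h be as defined. Let h ∈ H_n, suppose F_h is nonempty, and let x_h ∈ F_h be a point at which d(x₀,·) attains its minimum over F_h. Then F_h = [x_h, v]. -/

import Mathlib

open scoped ENNReal

namespace MedianGraph

variable {V : Type*}

/-- The metric interval `[x,y]` in a graph with respect to the edge-path metric. -/
def itv (G : SimpleGraph V) (x y : V) : Set V :=
  {z | G.dist x z + G.dist z y = G.dist x y}

/-- A subset of the vertex set is convex if it contains every interval between
two of its points. -/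
def Cvx (G : SimpleGraph V) (S : Set V) : Prop :=
  ∀ a ∈ S, ∀ b ∈ S, itv G a b ⊆ S

/-- A median graph: a connected graph in which every triple of vertices has a
unique median. -/
def IsMedianGraph (G : SimpleGraph V) : Prop :=
  G.Connected ∧ ∀ x y z : V, ∃! m : V,
    m ∈ itv G x y ∧ m ∈ itv G y z ∧ m ∈ itv G z x

/-- A halfspace: a subset which is nonempty, proper, convex with convex complement. -/
def IsHalfspace (G : SimpleGraph V) (h : Set V) : Prop :=
  h.Nonempty ∧ hᶜ.Nonempty ∧ Cvx G h ∧ Cvx G hᶜ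

/-- `Hset G x y` is the set of halfspaces containing `x` but not `y`. -/
def Hset (G : SimpleGraph V) (x y : V) : Set (Set V) :=
  {h | IsHalfspace G h ∧ x ∈ h ∧ y ∉ h}

/-- The normal distance `d_nor(x,y)`: the maximum cardinality of a chain (under
inclusion) in `Hset G x y`. -/
noncomputable def dnor (G : SimpleGraph V) (x y : V) : ℕ :=
  sSup {n : ℕ | ∃ c : Set (Set V), c ⊆ Hset G x y ∧ IsChain (· ⊆ ·) c ∧ c.encard = n}

/-- Two halfspaces cross if all four intersections of them and their
complements are nonempty. -/
def Crosses (h k : Set V) : Prop :=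
  (h ∩ k).Nonempty ∧ (h ∩ kᶜ).Nonempty ∧ (hᶜ ∩ k).Nonempty ∧ (hᶜ ∩ kᶜ).Nonempty

/-- `Hn G x₀ x n`: the halfspaces `h` in `Hset G x₀ x` such that the maximum
cardinality of a chain in `{k ∈ H(x₀,x) : k ⊆ h}` equals `n`. -/
noncomputable def Hn (G : SimpleGraph V) (x₀ x : V) (n : ℕ) : Set (Set V) :=
  {h | h ∈ Hset G x₀ x ∧
    sSup {m : ℕ | ∃ c : Set (Set V), c ⊆ {k | k ∈ Hset G x₀ x ∧ k ⊆ h} ∧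
      IsChain (· ⊆ ·) c ∧ c.encard = m} = n}

/-- `Fh G x₀ x n h = {w ∈ [x₀,x] ∩ S_nor(x₀,n) : w ∉ h}`. -/
def Fh (G : SimpleGraph V) (x₀ x : V) (n : ℕ) (h : Set V) : Set V :=
  {w | w ∈ itv G x₀ x ∧ dnor G x₀ w = n ∧ w ∉ h}

/-- The graph has dimension at most `η` if every family of pairwise crossing
halfspaces has cardinality at most `η`. -/
def DimLE (G : SimpleGraph V) (η : ℕ) : Prop :=
  ∀ F : Set (Set V), (∀ h ∈ F, IsHalfspace G h) →
    (∀ h ∈ F, ∀ k ∈ F, h ≠ k → Crosses h k) → F.encard ≤ η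

end MedianGraph

open MedianGraph


section Aux

variable {V : Type*} {G : SimpleGraph V}

private lemma dist_eq_one_of_adj (hc : G.Connected) {a b : V} (hab : G.Adj a b) :
    G.dist a b = 1 := by
  have h1 : G.dist a b ≤ 1 := by
    have := SimpleGraph.dist_le hab.toWalk
    simpa using this
  have h2 : G.dist a b ≠ 0 := fun h0 => hab.ne (hc.dist_eq_zero_iff.mp h0)
  omega

private lemma mem_itv_comm {a b z : V} (h : z ∈ itv G a b) : z ∈ itv G b a := by
  have h1 : G.dist a z = G.dist z a := SimpleGraph.dist_comm
  have h2 : G.dist z b = G.dist b z := SimpleGraph.dist_comm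
  have h3 : G.dist a b = G.dist b a := SimpleGraph.dist_comm
  simp only [itv, Set.mem_setOf_eq] at *
  omega

private lemma itv_subset_left (hc : G.Connected) {a b c : V} (hb : b ∈ itv G a c) :
    itv G a b ⊆ itv G a c := by
  intro z hz
  have t1 : G.dist a c ≤ G.dist a z + G.dist z c := hc.dist_triangle
  have t2 : G.dist z c ≤ G.dist z b + G.dist b c := hc.dist_triangle
  simp only [itv, Set.mem_setOf_eq] at *
  omega

private lemma itv_subset_right (hc : G.Connected) {a b c : V} (hb : b ∈ itv G a c) :
    itv G b c ⊆ itv G a c := by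
  intro z hz
  have t1 : G.dist a c ≤ G.dist a z + G.dist z c := hc.dist_triangle
  have t2 : G.dist a z ≤ G.dist a b + G.dist b z := hc.dist_triangle
  simp only [itv, Set.mem_setOf_eq] at *
  omega

private lemma itv_subset_of_left_mem (hc : G.Connected) {a b c : V} (ha : a ∈ itv G c b) :
    itv G a b ⊆ itv G c b := by
  intro z hz
  have t1 : G.dist c b ≤ G.dist c z + G.dist z b := hc.dist_triangle
  have t2 : G.dist c z ≤ G.dist c a + G.dist a z := hc.dist_triangle
  simp only [itv, Set.mem_setOf_eq] at *
  omega

/-- A halfspace is determined by any edge it crosses. -/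
private lemma halfspace_eq (hG : IsMedianGraph G) {k : Set V} (hk : IsHalfspace G k)
    {a b : V} (hab : G.Adj a b) (ha : a ∈ k) (hb : b ∉ k) :
    k = {z | G.dist z a < G.dist z b} := by
  obtain ⟨-, -, hcv, hcvc⟩ := hk
  have hd1 : G.dist a b = 1 := dist_eq_one_of_adj hG.1 hab
  ext z
  obtain ⟨m, hm1, hm2, hm3⟩ := (hG.2 z a b).exists
  have hab' : G.dist a m + G.dist m b = 1 := by
    have := hm2; simp only [itv, Set.mem_setOf_eq] at this; omega
  have hma_or : m = a ∨ m = b := by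
    have h0 : G.dist a m = 0 ∨ G.dist m b = 0 := by omega
    rcases h0 with h0 | h0
    · exact Or.inl (hG.1.dist_eq_zero_iff.mp h0).symm
    · exact Or.inr (hG.1.dist_eq_zero_iff.mp h0)
  simp only [Set.mem_setOf_eq]
  constructor
  · intro hz
    have hma : m = a := by
      rcases hma_or with h | h
      · exact h
      · exact absurd (hcv z hz a ha (h ▸ hm1)) hb
    have hmav : a ∈ itv G b z := hma ▸ hm3
    have e1 : G.dist b a + G.dist a z = G.dist b z := hmav
    have c1 : G.dist b a = G.dist a b := SimpleGraph.dist_comm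
    have c2 : G.dist a z = G.dist z a := SimpleGraph.dist_comm
    have c3 : G.dist b z = G.dist z b := SimpleGraph.dist_comm
    omega
  · intro hlt
    by_contra hz
    have hmb : m = b := by
      rcases hma_or with h | h
      · exact absurd (hcvc b hb z hz (h ▸ hm3)) (by simpa using ha)
      · exact h
    have hmbv : b ∈ itv G z a := hmb ▸ hm1
    have e1 : G.dist z b + G.dist b a = G.dist z a := hmbv
    have c1 : G.dist b a = G.dist a b := SimpleGraph.dist_comm
    omega

/-- Any chain (in fact any subset) of `Hset G x y` has at most `d(x,y)` elements. -/
private lemma encard_le_dist (hG : IsMedianGraph G) {x y : V} {c : Set (Set V)}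
    (hsub : c ⊆ Hset G x y) : c.encard ≤ (G.dist x y : ℕ∞) := by
  classical
  obtain ⟨p, hp⟩ := hG.1.exists_walk_length_eq_dist x y
  set F : Set V → ℕ := fun k => Nat.findGreatest (fun t => p.getVert t ∈ k) p.length with hF
  have key : ∀ k ∈ c, F k < p.length ∧
      k = {z | G.dist z (p.getVert (F k)) < G.dist z (p.getVert (F k + 1))} := by
    intro k hk
    obtain ⟨hk0, hkx, hky⟩ := hsub hk
    have h0 : p.getVert 0 ∈ k := by rw [SimpleGraph.Walk.getVert_zero]; exact hkx
    have hspec : p.getVert (F k) ∈ k :=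
      Nat.findGreatest_spec (P := fun t => p.getVert t ∈ k) (Nat.zero_le _) h0
    have hle : F k ≤ p.length := Nat.findGreatest_le _
    have hlt : F k < p.length := by
      rcases lt_or_eq_of_le hle with hcase | hcase
      · exact hcase
      · exfalso; apply hky
        rw [← SimpleGraph.Walk.getVert_length p, ← hcase]
        exact hspec
    have hnext : p.getVert (F k + 1) ∉ k :=
      Nat.findGreatest_is_greatest (P := fun t => p.getVert t ∈ k)
        (Nat.lt_succ_self _) (by omega)
    have hadj : G.Adj (p.getVert (F k)) (p.getVert (F k + 1)) :=
      p.adj_getVert_succ hlt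
    exact ⟨hlt, halfspace_eq hG hk0 hadj hspec hnext⟩
  have hinj : Set.InjOn F c := by
    intro k1 h1 k2 h2 he
    rw [(key k1 h1).2, (key k2 h2).2, he]
  calc c.encard = (F '' c).encard := (hinj.encard_image).symm
    _ ≤ ({i | i < p.length} : Set ℕ).encard := by
        apply Set.encard_mono
        rintro t ⟨k, hk, rfl⟩
        exact (key k hk).1
    _ = (p.length : ℕ∞) := Set.Nat.encard_range p.length
    _ = (G.dist x y : ℕ∞) := by rw [hp]

private lemma zero_mem_Sset (x y : V) :
    (0 : ℕ) ∈ {n : ℕ | ∃ c : Set (Set V), c ⊆ Hset G x y ∧ IsChain (· ⊆ ·) c ∧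
      c.encard = n} :=
  ⟨∅, Set.empty_subset _, Set.pairwise_empty _, by simp⟩

private lemma mem_Sset_le (hG : IsMedianGraph G) {x y : V} {N : ℕ}
    (hN : N ∈ {n : ℕ | ∃ c : Set (Set V), c ⊆ Hset G x y ∧ IsChain (· ⊆ ·) c ∧
      c.encard = n}) : N ≤ G.dist x y := by
  obtain ⟨c, h1, h2, h3⟩ := hN
  have := encard_le_dist hG h1
  rw [h3] at this
  exact_mod_cast this

private lemma bddAbove_Sset (hG : IsMedianGraph G) (x y : V) :
    BddAbove {n : ℕ | ∃ c : Set (Set V), c ⊆ Hset G x y ∧ IsChain (· ⊆ ·) c ∧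
      c.encard = n} :=
  ⟨G.dist x y, fun _ hN => mem_Sset_le hG hN⟩

private lemma le_dnor (hG : IsMedianGraph G) {x y : V} {N : ℕ}
    (hN : N ∈ {n : ℕ | ∃ c : Set (Set V), c ⊆ Hset G x y ∧ IsChain (· ⊆ ·) c ∧
      c.encard = n}) : N ≤ dnor G x y :=
  le_csSup (bddAbove_Sset hG x y) hN

private lemma dnor_le {x y : V} {m : ℕ}
    (h : ∀ N ∈ {n : ℕ | ∃ c : Set (Set V), c ⊆ Hset G x y ∧ IsChain (· ⊆ ·) c ∧
      c.encard = n}, N ≤ m) : dnor G x y ≤ m :=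
  csSup_le ⟨0, zero_mem_Sset x y⟩ h

private lemma Hset_mono {x₀ y w : V} (hw : w ∈ itv G x₀ y) :
    Hset G x₀ w ⊆ Hset G x₀ y := by
  rintro k ⟨hk, hx, hwn⟩
  exact ⟨hk, hx, fun hy => hwn (hk.2.2.1 x₀ hx y hy hw)⟩

private lemma dnor_mono (hG : IsMedianGraph G) {x₀ y w : V} (hw : w ∈ itv G x₀ y) :
    dnor G x₀ w ≤ dnor G x₀ y := by
  apply dnor_le
  rintro N ⟨c, h1, h2, h3⟩
  exact le_dnor hG ⟨c, h1.trans (Hset_mono hw), h2, h3⟩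

/-- Normal balls are convex: key step. -/
private lemma dnor_le_max (hG : IsMedianGraph G) {x₀ u w z : V} (hz : z ∈ itv G u w) :
    dnor G x₀ z ≤ max (dnor G x₀ u) (dnor G x₀ w) := by
  apply dnor_le
  rintro N ⟨c, hsub, hchain, hcard⟩
  rcases c.eq_empty_or_nonempty with rfl | hne
  · have : ((N : ℕ∞)) = 0 := by simpa using hcard.symm
    have : N = 0 := by exact_mod_cast this
    omega
  · have hfin : c.Finite := Set.finite_of_encard_eq_coe hcard
    obtain ⟨k0, hk0, hmax⟩ : ∃ k0 ∈ c, ∀ k ∈ c, k0 ⊆ k → k0 = k := by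
      obtain ⟨k0, hk0, hm⟩ := hfin.exists_maximal hne
      exact ⟨k0, hk0, fun k hk hkk => le_antisymm hkk (hm hk hkk)⟩
    have htop : ∀ k ∈ c, k ⊆ k0 := by
      intro k hk
      by_cases hkk : k = k0
      · exact hkk ▸ subset_rfl
      · rcases hchain hk hk0 hkk with hcmp | hcmp
        · exact hcmp
        · exact (hmax k hk hcmp).symm.subset
    obtain ⟨hk0h, hk0x, hk0z⟩ := hsub hk0
    have hcase : u ∉ k0 ∨ w ∉ k0 := by
      by_contra hcon
      push_neg at hcon
      exact hk0z (hk0h.2.2.1 u hcon.1 w hcon.2 hz)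
    rcases hcase with hu | hw
    · refine le_max_of_le_left (le_dnor hG ⟨c, ?_, hchain, hcard⟩)
      intro k hk
      exact ⟨(hsub hk).1, (hsub hk).2.1, fun hm => hu (htop k hk hm)⟩
    · refine le_max_of_le_right (le_dnor hG ⟨c, ?_, hchain, hcard⟩)
      intro k hk
      exact ⟨(hsub hk).1, (hsub hk).2.1, fun hm => hw (htop k hk hm)⟩

end Aux

/-- In a median graph, fix `x₀, x`, an integer `n ≥ 1` with
`d_nor(x₀,x) ≥ n`; let `v` be the point of `[x₀,x] ∩ B_nor(x₀,n)` at maximal distance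
from `x₀`, let `h ∈ H_n` with `F_h` nonempty, and let `x_h ∈ F_h` minimize `d(x₀,·)`
over `F_h`. Then `F_h = [x_h, v]`. -/
theorem Fh_eq_interval {V : Type*} (G : SimpleGraph V) (hG : IsMedianGraph G)
    (x₀ x : V) (n : ℕ) (hn : 1 ≤ n) (hd : n ≤ dnor G x₀ x)
    (v : V) (hv₁ : v ∈ itv G x₀ x) (hv₂ : dnor G x₀ v ≤ n)
    (hv₃ : ∀ w ∈ itv G x₀ x, dnor G x₀ w ≤ n → G.dist x₀ w ≤ G.dist x₀ v)
    (h : Set V) (hh : h ∈ Hn G x₀ x n)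
    (xh : V) (hxh : xh ∈ Fh G x₀ x n h)
    (hmin : ∀ w ∈ Fh G x₀ x n h, G.dist x₀ xh ≤ G.dist x₀ w) :
    Fh G x₀ x n h = itv G xh v := by
  classical
  have hconn := hG.1
  obtain ⟨hhH, hhsup⟩ := hh
  obtain ⟨hhHalf, hhx0, hhx⟩ := hhH
  obtain ⟨hxhD, hxhn, hxhh⟩ := hxh
  -- extract a chain of cardinality `n` below `h`
  have hTne : (0 : ℕ) ∈ {m : ℕ | ∃ c : Set (Set V),
      c ⊆ {k | k ∈ Hset G x₀ x ∧ k ⊆ h} ∧ IsChain (· ⊆ ·) c ∧ c.encard = m} :=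
    ⟨∅, Set.empty_subset _, Set.pairwise_empty _, by simp⟩
  have hTbdd : BddAbove {m : ℕ | ∃ c : Set (Set V),
      c ⊆ {k | k ∈ Hset G x₀ x ∧ k ⊆ h} ∧ IsChain (· ⊆ ·) c ∧ c.encard = m} := by
    refine ⟨G.dist x₀ x, ?_⟩
    rintro N ⟨c, h1, h2, h3⟩
    exact mem_Sset_le hG ⟨c, fun k hk => (h1 hk).1, h2, h3⟩
  have hnT : n ∈ {m : ℕ | ∃ c : Set (Set V),
      c ⊆ {k | k ∈ Hset G x₀ x ∧ k ⊆ h} ∧ IsChain (· ⊆ ·) c ∧ c.encard = m} := by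
    rw [← hhsup]
    exact Nat.sSup_mem ⟨0, hTne⟩ hTbdd
  obtain ⟨c₀, hc₀sub, hc₀chain, hc₀card⟩ := hnT
  -- every point outside h has normal distance at least n from x₀
  have lowFh : ∀ m : V, m ∉ h → n ≤ dnor G x₀ m := by
    intro m hm
    refine le_dnor hG ⟨c₀, ?_, hc₀chain, hc₀card⟩
    intro k hk
    obtain ⟨hk1, hk2⟩ := hc₀sub hk
    exact ⟨hk1.1, hk1.2.1, fun hmk => hm (hk2 hmk)⟩
  -- Step B : points of [x₀,x] in the normal ball lie in [x₀,v]
  have stepB : ∀ w ∈ itv G x₀ x, dnor G x₀ w ≤ n → w ∈ itv G x₀ v := by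
    intro w hwD hwn
    obtain ⟨m, hm1, hm2, hm3⟩ := (hG.2 w v x).exists
    have hmD : m ∈ itv G x₀ x := itv_subset_right hconn hv₁ hm2
    have hmn : dnor G x₀ m ≤ n := le_trans (dnor_le_max hG hm1) (max_le hwn hv₂)
    have hmd : G.dist x₀ m ≤ G.dist x₀ v := hv₃ m hmD hmn
    have e1 : G.dist x₀ v + G.dist v x = G.dist x₀ x := hv₁
    have e2 : G.dist v m + G.dist m x = G.dist v x := hm2
    have t1 : G.dist x₀ x ≤ G.dist x₀ m + G.dist m x := hconn.dist_triangle
    have hvm : G.dist v m = 0 := by omega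
    have hmv : m = v := by
      have : v = m := hconn.dist_eq_zero_iff.mp hvm
      exact this.symm
    have hvxw : v ∈ itv G x w := hmv ▸ hm3
    have e3 : G.dist x₀ w + G.dist w x = G.dist x₀ x := hwD
    have e4 : G.dist x v + G.dist v w = G.dist x w := hvxw
    show G.dist x₀ w + G.dist w v = G.dist x₀ v
    have c1 : G.dist w x = G.dist x w := SimpleGraph.dist_comm
    have c2 : G.dist w v = G.dist v w := SimpleGraph.dist_comm
    have c3 : G.dist x v = G.dist v x := SimpleGraph.dist_comm
    omega
  have hxh0v : xh ∈ itv G x₀ v := stepB xh hxhD (le_of_eq hxhn)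
  have hvnh : v ∉ h := fun hvh => hxhh (hhHalf.2.2.1 x₀ hhx0 v hvh hxh0v)
  have hvn : dnor G x₀ v = n := le_antisymm hv₂ (lowFh v hvnh)
  refine Set.Subset.antisymm ?_ ?_
  · -- Fh ⊆ [xh, v]
    intro w hw
    obtain ⟨hwD, hwn, hwh⟩ := hw
    have hw0v : w ∈ itv G x₀ v := stepB w hwD (le_of_eq hwn)
    obtain ⟨m, hm1, hm2, hm3⟩ := (hG.2 x₀ xh w).exists
    have hmD : m ∈ itv G x₀ x := itv_subset_left hconn hwD (mem_itv_comm hm3)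
    have hmnle : dnor G x₀ m ≤ n := hxhn ▸ dnor_mono hG hm1
    have hmh : m ∉ h := hhHalf.2.2.2 xh hxhh w hwh hm2
    have hmFh : m ∈ Fh G x₀ x n h := ⟨hmD, le_antisymm hmnle (lowFh m hmh), hmh⟩
    have hdle := hmin m hmFh
    have e1 : G.dist x₀ m + G.dist m xh = G.dist x₀ xh := hm1
    have t1 : G.dist x₀ xh ≤ G.dist x₀ m := hdle
    have hm0 : G.dist m xh = 0 := by omega
    have hmeq : m = xh := hconn.dist_eq_zero_iff.mp hm0
    have hxh0w : xh ∈ itv G x₀ w := mem_itv_comm (hmeq ▸ hm3)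
    show G.dist xh w + G.dist w v = G.dist xh v
    have e2 : G.dist x₀ xh + G.dist xh w = G.dist x₀ w := hxh0w
    have e3 : G.dist x₀ w + G.dist w v = G.dist x₀ v := hw0v
    have e4 : G.dist x₀ xh + G.dist xh v = G.dist x₀ v := hxh0v
    omega
  · -- [xh, v] ⊆ Fh
    intro z hz
    have hz0v : z ∈ itv G x₀ v := itv_subset_of_left_mem hconn hxh0v hz
    have hzD : z ∈ itv G x₀ x := itv_subset_left hconn hv₁ hz0v
    have hzh : z ∉ h := hhHalf.2.2.2 xh hxhh v hvnh hz
    have hzn : dnor G x₀ z ≤ n := by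
      have := dnor_le_max (x₀ := x₀) hG hz
      rw [hxhn, hvn, max_self] at this
      exact this
    exact ⟨hzD, le_antisymm hzn (lowFh z hzh), hzh⟩
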